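/- Let F(x) ∈ 𝓞[x] be a monic irreducible polynomial of degree n with root θ ∈ K̄, of depth r, and let φ(x) ∈ 𝓞[x] be a Montes approximation to F(x). Then any Okutsu frame of F(x) is an Okutsu frame of φ(x), and vice versa; in particular, the relation 'to be a Montes approximation to' is an equivalence relation on the set of all monic irreducible polynomials in 𝓞[x]. -/

import Mathlib

open Polynomial

noncomputable section

/-- A local field `K` of characteristic zero, presented through the canonical extension `v`
of its normalized discrete valuation (additively written, `v(K*) = ℤ`) to a fixed algebraic
closure of `K`.  The axioms state that `v` is an additive valuation on the algebraic closure,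
that its restriction to `K` is a surjective discrete valuation onto `ℤ` (plus `⊤` at `0`),
that it is invariant under `K`-automorphisms (a property of the canonical extension), that
`K` is complete and that its residue field is finite. -/
structure OkutsuSetup (K : Type) [Field K] [CharZero K] : Type where
  v : AlgebraicClosure K → WithTop ℚ
  v_eq_top_iff : ∀ x, v x = ⊤ ↔ x = 0
  v_mul : ∀ x y, v (x * y) = v x + v y
  v_min_le_add : ∀ x y, min (v x) (v y) ≤ v (x + y)
  v_neg : ∀ x, v (-x) = v x
  v_one : v 1 = 0
  v_base_int : ∀ x : K, x ≠ 0 →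
    ∃ k : ℤ, v (algebraMap K (AlgebraicClosure K) x) = ((k : ℚ) : WithTop ℚ)
  v_base_one : ∃ x : K, v (algebraMap K (AlgebraicClosure K) x) = ((1 : ℚ) : WithTop ℚ)
  v_aut_invariant : ∀ (M : IntermediateField K (AlgebraicClosure K)) (σ : ↥M ≃ₐ[K] ↥M)
    (x : ↥M), v ((σ x : ↥M) : AlgebraicClosure K) = v ((x : ↥M) : AlgebraicClosure K)
  complete : ∀ a : ℕ → K,
    (∀ N : ℚ, ∃ M : ℕ, ∀ p q : ℕ, M ≤ p → M ≤ q →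
      ((N : ℚ) : WithTop ℚ) < v (algebraMap K (AlgebraicClosure K) (a p - a q))) →
    ∃ b : K, ∀ N : ℚ, ∃ M : ℕ, ∀ p : ℕ, M ≤ p →
      ((N : ℚ) : WithTop ℚ) < v (algebraMap K (AlgebraicClosure K) (a p - b))
  finite_residue : ∃ T : Finset K, ∀ x : K,
    0 ≤ v (algebraMap K (AlgebraicClosure K) x) →
    ∃ y ∈ T, 0 < v (algebraMap K (AlgebraicClosure K) (x - y))

namespace OkutsuSetup

variable {K : Type} [Field K] [CharZero K]

/-- The valuation of `K` itself. -/
def vK (S : OkutsuSetup K) (x : K) : WithTop ℚ :=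
  S.v (algebraMap K (AlgebraicClosure K) x)

/-- The ring of integers `𝓞` of `K`. -/
def integers (S : OkutsuSetup K) : Subring K where
  carrier := {x : K | 0 ≤ S.vK x}
  zero_mem' := by
    show (0 : WithTop ℚ) ≤ S.vK 0
    unfold vK
    rw [map_zero, (S.v_eq_top_iff 0).mpr rfl]
    exact le_top
  one_mem' := by
    show (0 : WithTop ℚ) ≤ S.vK 1
    unfold vK
    rw [map_one, S.v_one]
  add_mem' := by
    intro a b ha hb
    show (0 : WithTop ℚ) ≤ S.vK (a + b)
    unfold vK
    rw [map_add]
    exact le_trans (le_min ha hb) (S.v_min_le_add _ _)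
  mul_mem' := by
    intro a b ha hb
    show (0 : WithTop ℚ) ≤ S.vK (a * b)
    unfold vK
    rw [map_mul, S.v_mul]
    exact add_nonneg ha hb
  neg_mem' := by
    intro a ha
    show (0 : WithTop ℚ) ≤ S.vK (-a)
    unfold vK
    rw [map_neg, S.v_neg]
    exact ha

/-- The maximal ideal `𝔪` of the ring of integers of `K`. -/
def maximalIdeal (S : OkutsuSetup K) : Ideal S.integers where
  carrier := {x : S.integers | 0 < S.vK (x : K)}
  zero_mem' := by
    show (0 : WithTop ℚ) < S.vK ((0 : S.integers) : K)
    have h0 : ((0 : S.integers) : K) = (0 : K) := rfl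
    rw [h0]
    unfold vK
    rw [map_zero, (S.v_eq_top_iff 0).mpr rfl]
    exact WithTop.coe_lt_top 0
  add_mem' := by
    intro a b ha hb
    show (0 : WithTop ℚ) < S.vK ((a : K) + (b : K))
    refine lt_of_lt_of_le (lt_min ha hb) ?_
    unfold vK
    rw [map_add]
    exact S.v_min_le_add _ _
  smul_mem' := by
    intro c x hx
    show (0 : WithTop ℚ) < S.vK ((c : K) * (x : K))
    unfold vK
    rw [map_mul, S.v_mul]
    calc (0 : WithTop ℚ) < S.v (algebraMap K (AlgebraicClosure K) (x : K)) := hx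
    _ ≤ _ + _ := le_add_of_nonneg_left c.2

/-- The residue field `𝓞/𝔪` of `K`. -/
abbrev Residue (S : OkutsuSetup K) : Type :=
  S.integers ⧸ S.maximalIdeal

/-- The residue characteristic of `K`. -/
def resChar (S : OkutsuSetup K) : ℕ :=
  ringChar S.Residue

/-- Reduction of a polynomial with integer coefficients modulo `𝔪`. -/
def reduce (S : OkutsuSetup K) (F : Polynomial S.integers) : Polynomial S.Residue :=
  F.map (Ideal.Quotient.mk S.maximalIdeal)

/-- Evaluation of a polynomial with coefficients in `𝓞` at a point of the algebraic
closure of `K`. -/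
def evalK (S : OkutsuSetup K) (F : Polynomial S.integers) (θ : AlgebraicClosure K) :
    AlgebraicClosure K :=
  Polynomial.aeval θ (F.map S.integers.subtype)

/-- `v(g)` for a polynomial `g`: the minimum of the valuations of its coefficients. -/
def vPoly (S : OkutsuSetup K) (g : Polynomial S.integers) : WithTop ℚ :=
  (Finset.range (g.natDegree + 1)).inf fun i => S.vK ((g.coeff i : K))

/-- The ramification index `e(E/K)` of a finite subextension `E` of `K̄/K`: the least
positive integer `e` such that all values of `v` on `E*` lie in `(1/e)ℤ`. -/
def ramIdx (S : OkutsuSetup K) (E : IntermediateField K (AlgebraicClosure K)) : ℕ :=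
  sInf {e : ℕ | 0 < e ∧ ∀ x ∈ E, x ≠ (0 : AlgebraicClosure K) →
    ∃ k : ℤ, S.v x = (((k : ℚ) / (e : ℚ) : ℚ) : WithTop ℚ)}

/-- The residual degree `f(E/K)` of a finite subextension `E` of `K̄/K`; since `K` is a
complete discretely valued field, `[E : K] = e(E/K)·f(E/K)`. -/
def resDeg (S : OkutsuSetup K) (E : IntermediateField K (AlgebraicClosure K)) : ℕ :=
  Module.finrank K E / S.ramIdx E

/-- A subextension `E/K` is tamely ramified when its ramification index is prime to the
residue characteristic of `K`. -/
def IsTame (S : OkutsuSetup K) (E : IntermediateField K (AlgebraicClosure K)) : Prop :=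
  Nat.Coprime (S.ramIdx E) S.resChar

/-- The Okutsu invariants `m_0 = 1 ≤ m_1 < ⋯ < m_r < m_{r+1} = n` and
`μ_0 = 0 < μ_1 < ⋯ < μ_r < μ_{r+1} = ∞` of a monic irreducible polynomial of degree `n`
with root `θ`:  `m i` is the least `[K(η):K]` over `η` with `v(θ-η) > μ (i-1)`, and
`μ i` is the greatest value of `v(θ-η)` over `η` with `[K(η):K] = m i`.
`r` is the depth: the number of indices `i ≥ 1` with `m i < n`. -/
structure OkutsuData (S : OkutsuSetup K) (θ : AlgebraicClosure K) (n : ℕ) : Type where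
  r : ℕ
  m : ℕ → ℕ
  μ : ℕ → WithTop ℚ
  m_zero : m 0 = 1
  mu_zero : μ 0 = 0
  m_isLeast : ∀ i, 1 ≤ i → i ≤ r + 1 →
    IsLeast {d : ℕ | ∃ η : AlgebraicClosure K,
      (minpoly K η).natDegree = d ∧ μ (i - 1) < S.v (θ - η)} (m i)
  mu_isGreatest : ∀ i, 1 ≤ i → i ≤ r + 1 →
    IsGreatest {c : WithTop ℚ | ∃ η : AlgebraicClosure K,
      (minpoly K η).natDegree = m i ∧ S.v (θ - η) = c} (μ i)
  m_lt_n : ∀ i, 1 ≤ i → i ≤ r → m i < n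
  m_last : m (r + 1) = n

/-- `[F_1, …, F_r]` is an Okutsu frame of the monic irreducible polynomial with root `θ`
and Okutsu invariants `D`: for each `1 ≤ i ≤ r`, `F_i` is the minimal polynomial of some
`α_i ∈ K̄` with `[K(α_i):K] = m_i` and `v(θ - α_i) = μ_i`. -/
def IsFrame (S : OkutsuSetup K) {θ : AlgebraicClosure K} {n : ℕ} (D : OkutsuData S θ n)
    (Fr : ℕ → Polynomial S.integers) : Prop :=
  ∀ i, 1 ≤ i → i ≤ D.r → ∃ α : AlgebraicClosure K,
    (minpoly K α).natDegree = D.m i ∧ S.v (θ - α) = D.μ i ∧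
      (Fr i).map S.integers.subtype = minpoly K α

/-- `φ` is a Montes approximation to the monic irreducible polynomial `F`:  a monic
irreducible polynomial of the same degree `n` having a root `α` with `v(θ - α) > μ_r`,
where `θ` is a root of `F`. -/
def IsMontesApprox (S : OkutsuSetup K) (F φ : Polynomial S.integers) : Prop :=
  φ.Monic ∧ Irreducible (φ.map S.integers.subtype) ∧ φ.natDegree = F.natDegree ∧
    ∃ θ : AlgebraicClosure K, S.evalK F θ = 0 ∧
      ∃ D : OkutsuData S θ F.natDegree, ∃ α : AlgebraicClosure K,
        S.evalK φ α = 0 ∧ D.μ D.r < S.v (θ - α)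

end OkutsuSetup

namespace OkutsuProof

open OkutsuSetup IntermediateField

variable {K : Type} [Field K] [CharZero K] (S : OkutsuSetup K)
set_option linter.unusedSectionVars false

local notation "Kbar" => AlgebraicClosure K

/-- degree of an element of the algebraic closure. -/
noncomputable abbrev dK (η : AlgebraicClosure K) : ℕ := (minpoly K η).natDegree

lemma v_zero : S.v 0 = ⊤ := (S.v_eq_top_iff 0).mpr rfl

lemma v_ne_top {x : AlgebraicClosure K} (h : x ≠ 0) : S.v x ≠ ⊤ :=
  fun ht => h ((S.v_eq_top_iff x).mp ht)

lemma v_sub_comm (x y : AlgebraicClosure K) : S.v (x - y) = S.v (y - x) := by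
  rw [← S.v_neg (y - x), neg_sub]

lemma v_min_le_sub (a b : AlgebraicClosure K) : min (S.v a) (S.v b) ≤ S.v (a - b) := by
  calc min (S.v a) (S.v b) = min (S.v a) (S.v (-b)) := by rw [S.v_neg]
    _ ≤ S.v (a + -b) := S.v_min_le_add a (-b)
    _ = S.v (a - b) := by rw [sub_eq_add_neg]

lemma v_add_eq_of_lt {a b : AlgebraicClosure K} (h : S.v b < S.v a) :
    S.v (a + b) = S.v b := by
  refine le_antisymm ?_ ?_
  · have h2 : min (S.v (a + b)) (S.v a) ≤ S.v b := by
      have := v_min_le_sub S (a + b) a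
      simpa using this
    by_contra hlt
    push_neg at hlt
    exact absurd h2 (not_le.mpr (lt_min hlt h))
  · have := S.v_min_le_add a b
    rwa [min_eq_right h.le] at this

/-- the key ultrametric "three points" lemma. -/
lemma v_three {x y z : AlgebraicClosure K} (h : S.v (x - y) < S.v (x - z)) :
    S.v (z - y) = S.v (x - y) := by
  have hz : z - y = (z - x) + (x - y) := by ring
  rw [hz, v_add_eq_of_lt S]
  rwa [v_sub_comm S z x]

lemma v_conj (σ : AlgebraicClosure K ≃ₐ[K] AlgebraicClosure K) (x : AlgebraicClosure K) :
    S.v (σ x) = S.v x := by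
  have := S.v_aut_invariant ⊤
    ((IntermediateField.topEquiv (F := K) (E := AlgebraicClosure K)).trans
      (σ.trans (IntermediateField.topEquiv (F := K) (E := AlgebraicClosure K)).symm))
    ⟨x, trivial⟩
  have h2 : (IntermediateField.topEquiv (F := K) (E := AlgebraicClosure K)) ⟨x, trivial⟩ = x := rfl
  simpa [h2] using this

lemma exists_conj {x y : AlgebraicClosure K} (h : Polynomial.aeval y (minpoly K x) = 0) :
    ∃ σ : AlgebraicClosure K ≃ₐ[K] AlgebraicClosure K, σ x = y :=
  minpoly.exists_algEquiv_of_root' (Algebra.IsAlgebraic.isAlgebraic x) h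

lemma dK_pos (x : AlgebraicClosure K) : 0 < dK (K := K) x :=
  minpoly.natDegree_pos (Algebra.IsAlgebraic.isAlgebraic x).isIntegral

lemma dK_conj (σ : AlgebraicClosure K ≃ₐ[K] AlgebraicClosure K) (x : AlgebraicClosure K) :
    dK (K := K) (σ x) = dK (K := K) x := by
  unfold dK; rw [minpoly.algEquiv_eq]

lemma v_multiset_prod (M : Multiset (AlgebraicClosure K)) :
    S.v M.prod = (M.map S.v).sum := by
  induction M using Multiset.induction with
  | empty => simpa using S.v_one
  | cons a M ih => simp [S.v_mul, ih]

lemma nsmul_coe (n : ℕ) (q : ℚ) : n • ((q : WithTop ℚ)) = (((n : ℚ) * q : ℚ) : WithTop ℚ) := by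
  induction n with
  | zero => simp
  | succ n ih =>
    rw [succ_nsmul, ih, ← WithTop.coe_add, WithTop.coe_eq_coe]
    push_cast
    ring

lemma v_neg_one_pow (d : ℕ) : S.v ((-1 : AlgebraicClosure K) ^ d) = 0 := by
  rcases Nat.even_or_odd d with h | h
  · rw [h.neg_one_pow]; exact S.v_one
  · rw [h.neg_one_pow, ← S.v_neg, neg_neg]; exact S.v_one

/-- The valuation of a nonzero element of degree `d` lies in `(1/d)ℤ`. -/
lemma exists_int_v (x : AlgebraicClosure K) (hx : x ≠ 0) :
    ∃ k : ℤ, S.v x = (((k : ℚ) / (dK (K := K) x) : ℚ) : WithTop ℚ) := by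
  classical
  set p := minpoly K x with hp
  have hint : IsIntegral K x := (Algebra.IsAlgebraic.isAlgebraic x).isIntegral
  set d := p.natDegree with hd
  have hd0 : 0 < d := minpoly.natDegree_pos hint
  obtain ⟨q, hq⟩ := WithTop.ne_top_iff_exists.mp (v_ne_top S hx)
  set P := p.map (algebraMap K (AlgebraicClosure K)) with hP
  have hPmonic : P.Monic := (minpoly.monic hint).map _
  have hsplit : P.Splits := IsAlgClosed.splits P
  have hcard : P.roots.card = d := by
    have := ((Polynomial.natDegree_map (algebraMap K (AlgebraicClosure K))).symm.trans
      (IsAlgClosed.splits (p.map (algebraMap K (AlgebraicClosure K)))).natDegree_eq_card_roots)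
    rw [← this, hd]
  have hconst : ∀ ρ ∈ P.roots, S.v ρ = S.v x := by
    intro ρ hρ
    have hroot : Polynomial.aeval ρ p = 0 := by
      have := Polynomial.isRoot_of_mem_roots hρ
      rwa [Polynomial.IsRoot, hP, Polynomial.eval_map, ← Polynomial.aeval_def] at this
    obtain ⟨σ, hσ⟩ := exists_conj hroot
    rw [← hσ, v_conj]
  have hprodeq : P.coeff 0 = (-1) ^ P.natDegree * P.roots.prod :=
    hsplit.coeff_zero_eq_prod_roots_of_monic hPmonic
  have hvprod : S.v P.roots.prod = (((d : ℚ) * q : ℚ) : WithTop ℚ) := by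
    rw [v_multiset_prod]
    have : P.roots.map S.v = Multiset.replicate d (S.v x) := by
      rw [Multiset.eq_replicate]
      constructor
      · rw [Multiset.card_map, hcard]
      · intro b hb
        obtain ⟨ρ, hρ, rfl⟩ := Multiset.mem_map.mp hb
        exact hconst ρ hρ
    rw [this, ← hq, Multiset.sum_replicate, nsmul_coe]
  have hc0 : p.coeff 0 ≠ 0 := minpoly.coeff_zero_ne_zero hint hx
  obtain ⟨k, hk⟩ := S.v_base_int (p.coeff 0) hc0
  have hco : P.coeff 0 = algebraMap K (AlgebraicClosure K) (p.coeff 0) := by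
    rw [hP, Polynomial.coeff_map]
  have hvc : S.v (P.coeff 0) = ((k : ℚ) : WithTop ℚ) := by rw [hco]; exact hk
  have : ((k : ℚ) : WithTop ℚ) = (((d : ℚ) * q : ℚ) : WithTop ℚ) := by
    rw [← hvc, hprodeq, S.v_mul, v_neg_one_pow, zero_add, hvprod]
  have hqq : (k : ℚ) = (d : ℚ) * q := by exact_mod_cast this
  refine ⟨k, ?_⟩
  rw [← hq]
  congr 1
  rw [hqq]
  change q = ((d : ℚ) * q) / (d : ℚ)
  have hdQ : (d : ℚ) ≠ 0 := by exact_mod_cast hd0.ne'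
  field_simp

/-- Degree bound for a difference: `deg (θ - η) ≤ deg θ * deg η`. -/
lemma dK_sub_le (θ η : AlgebraicClosure K) :
    dK (K := K) (θ - η) ≤ dK (K := K) θ * dK (K := K) η := by
  classical
  have hθ : IsIntegral K θ := (Algebra.IsAlgebraic.isAlgebraic θ).isIntegral
  have hη : IsIntegral K η := (Algebra.IsAlgebraic.isAlgebraic η).isIntegral
  haveI : FiniteDimensional K K⟮θ⟯ := IntermediateField.adjoin.finiteDimensional hθ
  haveI : FiniteDimensional K K⟮η⟯ := IntermediateField.adjoin.finiteDimensional hη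
  set E := K⟮θ⟯ ⊔ K⟮η⟯ with hE
  haveI : FiniteDimensional K E := IntermediateField.finiteDimensional_sup _ _
  have hmemθ : θ ∈ E := le_sup_left (α := IntermediateField K (AlgebraicClosure K))
    (IntermediateField.mem_adjoin_simple_self K θ)
  have hmemη : η ∈ E := le_sup_right (α := IntermediateField K (AlgebraicClosure K))
    (IntermediateField.mem_adjoin_simple_self K η)
  have hmem : θ - η ∈ E := sub_mem hmemθ hmemη
  have h1 : minpoly K (algebraMap (↥E) (AlgebraicClosure K) ⟨θ - η, hmem⟩)
      = minpoly K (⟨θ - η, hmem⟩ : E) :=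
    minpoly.algebraMap_eq (algebraMap (↥E) (AlgebraicClosure K)).injective _
  have h2 : dK (K := K) (θ - η) ≤ Module.finrank K E := by
    have := minpoly.natDegree_le (A := K) (⟨θ - η, hmem⟩ : E)
    unfold dK
    rw [show (θ - η : AlgebraicClosure K)
        = algebraMap (↥E) (AlgebraicClosure K) ⟨θ - η, hmem⟩ from rfl, h1]
    exact this
  refine h2.trans ?_
  have h3 := IntermediateField.finrank_sup_le (E1 := K⟮θ⟯) (E2 := K⟮η⟯)
  rw [IntermediateField.adjoin.finrank hθ, IntermediateField.adjoin.finrank hη] at h3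
  exact h3

/-- A nonempty set of values bounded above with denominators dividing `N` has a
greatest element. -/
lemma exists_greatest_of_discrete (T : Set (WithTop ℚ)) (hne : T.Nonempty) (B : ℚ)
    (hB : ∀ t ∈ T, t ≤ (B : WithTop ℚ)) (N : ℕ) (hN : 0 < N)
    (hdisc : ∀ t ∈ T, ∃ k : ℤ, t = (((k : ℚ) / (N : ℚ) : ℚ) : WithTop ℚ)) :
    ∃ g, IsGreatest T g := by
  classical
  set P : ℤ → Prop := fun k => (((k : ℚ) / (N : ℚ) : ℚ) : WithTop ℚ) ∈ T with hPdef
  have hinh : ∃ k, P k := by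
    obtain ⟨t, ht⟩ := hne
    obtain ⟨k, hk⟩ := hdisc t ht
    exact ⟨k, by rw [hPdef]; simpa [← hk] using ht⟩
  have hNQ : (0 : ℚ) < (N : ℚ) := by exact_mod_cast hN
  have hbdd : ∃ b : ℤ, ∀ k, P k → k ≤ b := by
    refine ⟨⌈B * (N : ℚ)⌉, fun k hk => ?_⟩
    have h1 : (((k : ℚ) / (N : ℚ) : ℚ) : WithTop ℚ) ≤ (B : WithTop ℚ) := hB _ hk
    have h2 : ((k : ℚ) / (N : ℚ) : ℚ) ≤ B := by exact_mod_cast h1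
    have h3 : (k : ℚ) ≤ B * (N : ℚ) := by
      rw [div_le_iff₀ hNQ] at h2; exact h2
    exact_mod_cast h3.trans (Int.le_ceil _)
  obtain ⟨k₀, hk₀, hub⟩ := Int.exists_greatest_of_bdd hbdd hinh
  refine ⟨(((k₀ : ℚ) / (N : ℚ) : ℚ) : WithTop ℚ), hk₀, ?_⟩
  intro t ht
  obtain ⟨k, hk⟩ := hdisc t ht
  have hkP : P k := by rw [hPdef]; simpa [← hk] using ht
  have : (k : ℚ) / (N : ℚ) ≤ (k₀ : ℚ) / (N : ℚ) := by
    gcongr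
    exact_mod_cast hub k hkP
  rw [hk]
  exact_mod_cast this

/-- Krasner-type bound: values `v(θ - η)` for `η` of degree smaller than `deg θ`
are bounded above. -/
lemma v_bounded (θ : AlgebraicClosure K) : ∃ B : ℚ, ∀ η : AlgebraicClosure K,
    dK (K := K) η < dK (K := K) θ → S.v (θ - η) ≤ ((B : ℚ) : WithTop ℚ) := by
  classical
  set n := dK (K := K) θ with hn
  by_cases hn1 : n ≤ 1
  · exact ⟨0, fun η hη => absurd (dK_pos η) (by omega)⟩
  push_neg at hn1
  have hθint : IsIntegral K θ := (Algebra.IsAlgebraic.isAlgebraic θ).isIntegral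
  set p := minpoly K θ with hp
  set P := p.map (algebraMap K (AlgebraicClosure K)) with hP
  have hPmonic : P.Monic := (minpoly.monic hθint).map _
  have hPne : P ≠ 0 := hPmonic.ne_zero
  have hsep : p.Separable := (minpoly.irreducible hθint).separable
  have hPsep : P.Separable := hsep.map
  have hnodup : P.roots.Nodup := Polynomial.nodup_roots hPsep
  have hcard : P.roots.toFinset.card = n := by
    rw [Multiset.toFinset_card_of_nodup hnodup]
    exact ((Polynomial.natDegree_map (algebraMap K (AlgebraicClosure K))).symm.trans
      (IsAlgClosed.splits (p.map (algebraMap K (AlgebraicClosure K)))).natDegree_eq_card_roots).symm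
  set R : Finset (AlgebraicClosure K) := P.roots.toFinset.erase θ with hR
  have hRne : R.Nonempty := by
    have hθroot : θ ∈ P.roots.toFinset := by
      rw [Multiset.mem_toFinset, Polynomial.mem_roots hPne]
      rw [Polynomial.IsRoot, hP, Polynomial.eval_map, ← Polynomial.aeval_def]
      exact minpoly.aeval K θ
    have hcardR : R.card = n - 1 := by
      rw [hR, Finset.card_erase_of_mem hθroot, hcard]
    exact Finset.card_pos.mp (by omega)
  set Bw : WithTop ℚ := R.sup' hRne (fun ρ => S.v (θ - ρ)) with hBw
  have hBwtop : Bw < ⊤ := by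
    rw [hBw, Finset.sup'_lt_iff]
    intro ρ hρ
    have hne : θ - ρ ≠ 0 := sub_ne_zero.mpr (Ne.symm (Finset.ne_of_mem_erase hρ))
    exact lt_top_iff_ne_top.mpr (v_ne_top S hne)
  obtain ⟨B, hB⟩ := WithTop.ne_top_iff_exists.mp hBwtop.ne
  refine ⟨B, fun η hη => ?_⟩
  rw [hB]
  by_contra hgt
  push_neg at hgt
  have hηint : IsIntegral K η := (Algebra.IsAlgebraic.isAlgebraic η).isIntegral
  set A := K⟮η⟯ with hA
  haveI : FiniteDimensional K A := IntermediateField.adjoin.finiteDimensional hηint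
  haveI : Algebra.IsAlgebraic (↥A) (AlgebraicClosure K) :=
    Algebra.IsAlgebraic.tower_top (K := K) (↥A)
  haveI : IsAlgClosure (↥A) (AlgebraicClosure K) := ⟨inferInstance, inferInstance⟩
  have hθA : IsIntegral (↥A) θ := hθint.tower_top
  set q := minpoly (↥A) θ with hq
  set Q := q.map (algebraMap (↥A) (AlgebraicClosure K)) with hQ
  have hdvd : q ∣ p.map (algebraMap K (↥A)) := minpoly.dvd _ _ (by
    rw [Polynomial.aeval_map_algebraMap]; exact minpoly.aeval K θ)
  have hQdvdP : Q ∣ P := by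
    have hPeq : P = (p.map (algebraMap K (↥A))).map (algebraMap (↥A) (AlgebraicClosure K)) := by
      rw [Polynomial.map_map, ← IsScalarTower.algebraMap_eq]
    rw [hPeq]
    exact Polynomial.map_dvd _ hdvd
  have hroots : ∀ ρ ∈ Q.roots, ρ = θ := by
    intro ρ hρ
    have hroot : Polynomial.aeval ρ q = 0 := by
      have := Polynomial.isRoot_of_mem_roots hρ
      rwa [Polynomial.IsRoot, hQ, Polynomial.eval_map, ← Polynomial.aeval_def] at this
    obtain ⟨σ, hσ⟩ := minpoly.exists_algEquiv_of_root' (K := ↥A)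
      (Algebra.IsAlgebraic.isAlgebraic θ) hroot
    have hση : σ η = η := by
      have h1 : η = algebraMap (↥A) (AlgebraicClosure K)
          (IntermediateField.AdjoinSimple.gen K η) :=
        (IntermediateField.AdjoinSimple.algebraMap_gen K η).symm
      rw [h1, AlgEquiv.commutes]
    have hvρη : S.v (ρ - η) = S.v (θ - η) := by
      have heq : ρ - η = (σ.restrictScalars K) (θ - η) := by
        rw [map_sub]
        have h2 : (σ.restrictScalars K) θ = ρ := hσ
        have h3 : (σ.restrictScalars K) η = η := hση
        rw [h2, h3]
      rw [heq, v_conj]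
    have hPρ : ρ ∈ P.roots := by
      rw [Polynomial.mem_roots hPne]
      have hQρ : Polynomial.eval ρ Q = 0 := by
        rw [hQ, Polynomial.eval_map, ← Polynomial.aeval_def]; exact hroot
      exact Polynomial.eval_eq_zero_of_dvd_of_eval_eq_zero hQdvdP hQρ
    by_contra hne
    have hmem : ρ ∈ R := Finset.mem_erase.mpr ⟨hne, Multiset.mem_toFinset.mpr hPρ⟩
    have hle : S.v (θ - ρ) ≤ Bw := Finset.le_sup' (fun ρ => S.v (θ - ρ)) hmem
    have hgt2 : Bw < S.v (θ - ρ) := by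
      have h3 : θ - ρ = (θ - η) + (η - ρ) := by ring
      have hvηρ : S.v (η - ρ) = S.v (θ - η) := by rw [v_sub_comm S, hvρη]
      calc Bw < S.v (θ - η) := hgt
        _ ≤ S.v (θ - ρ) := by
          rw [h3]
          refine le_trans ?_ (S.v_min_le_add _ _)
          rw [hvηρ, min_self]
    exact absurd hle (not_le.mpr hgt2)
  have hqsep : q.Separable := Polynomial.Separable.of_dvd hsep.map hdvd
  have hQnodup : Q.roots.Nodup := Polynomial.nodup_roots (hqsep.map)
  have hQcard : Q.roots.card = q.natDegree :=
    ((Polynomial.natDegree_map (algebraMap (↥A) (AlgebraicClosure K))).symm.trans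
      (IsAlgClosed.splits (q.map (algebraMap (↥A) (AlgebraicClosure K)))).natDegree_eq_card_roots).symm
  have hqle : q.natDegree ≤ 1 := by
    rw [← hQcard, ← Multiset.toFinset_card_of_nodup hQnodup]
    have hsub : Q.roots.toFinset ⊆ {θ} := fun ρ hρ => by
      rw [Finset.mem_singleton]; exact hroots ρ (Multiset.mem_toFinset.mp hρ)
    calc Q.roots.toFinset.card ≤ ({θ} : Finset (AlgebraicClosure K)).card :=
          Finset.card_le_card hsub
      _ = 1 := rfl
  have hdeg1 : q.natDegree = 1 := le_antisymm hqle (minpoly.natDegree_pos hθA)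
  obtain ⟨a, ha⟩ := minpoly.natDegree_eq_one_iff.mp hdeg1
  have hθinA : θ ∈ A := by rw [← ha]; exact a.2
  have hleA : K⟮θ⟯ ≤ A := by
    rw [IntermediateField.adjoin_le_iff]
    simpa using hθinA
  have hfin : n ≤ dK (K := K) η := by
    have h1 : Module.finrank K K⟮θ⟯ = n := IntermediateField.adjoin.finrank hθint
    have h2 : Module.finrank K A = dK (K := K) η := IntermediateField.adjoin.finrank hηint
    rw [← h1, ← h2]
    exact LinearMap.finrank_le_finrank_of_injective
      (f := (IntermediateField.inclusion hleA).toLinearMap)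
      ((IntermediateField.inclusion hleA).toRingHom.injective)
  omega

/-- The set of degrees of elements approximating `θ` better than `μ₀`. -/
def mset (θ : AlgebraicClosure K) (μ₀ : WithTop ℚ) : Set ℕ :=
  {d : ℕ | ∃ η : AlgebraicClosure K, (minpoly K η).natDegree = d ∧ μ₀ < S.v (θ - η)}

/-- The set of values `v(θ - η)` over `η` of degree `m`. -/
def cset (θ : AlgebraicClosure K) (m : ℕ) : Set (WithTop ℚ) :=
  {c : WithTop ℚ | ∃ η : AlgebraicClosure K, (minpoly K η).natDegree = m ∧ S.v (θ - η) = c}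

lemma mset_mem_n {θ : AlgebraicClosure K} {μ₀ : WithTop ℚ} (hμ : μ₀ < ⊤) :
    dK (K := K) θ ∈ mset S θ μ₀ :=
  ⟨θ, rfl, by rw [sub_self, v_zero]; exact hμ⟩

lemma isLeast_mset {θ : AlgebraicClosure K} {μ₀ : WithTop ℚ} (hμ : μ₀ < ⊤) :
    IsLeast (mset S θ μ₀) (sInf (mset S θ μ₀)) :=
  ⟨Nat.sInf_mem ⟨_, mset_mem_n S hμ⟩, fun _ hd => Nat.sInf_le hd⟩

lemma sInf_mset_le {θ : AlgebraicClosure K} {μ₀ : WithTop ℚ} (hμ : μ₀ < ⊤) :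
    sInf (mset S θ μ₀) ≤ dK (K := K) θ :=
  Nat.sInf_le (mset_mem_n S hμ)

lemma sInf_mset_pos {θ : AlgebraicClosure K} {μ₀ : WithTop ℚ} (hμ : μ₀ < ⊤) :
    1 ≤ sInf (mset S θ μ₀) := by
  obtain ⟨η, hη, _⟩ := (isLeast_mset S (θ := θ) hμ).1
  have h2 : 0 < (minpoly K η).natDegree := dK_pos η
  omega

lemma exists_greatest_cset {θ : AlgebraicClosure K} {μ₀ : WithTop ℚ} (hμ : μ₀ < ⊤) :
    ∃ c, IsGreatest (cset S θ (sInf (mset S θ μ₀))) c ∧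
      (sInf (mset S θ μ₀) < dK (K := K) θ → c ≠ ⊤ ∧ μ₀ < c) ∧
      (sInf (mset S θ μ₀) = dK (K := K) θ → c = ⊤) := by
  classical
  set n := dK (K := K) θ with hn
  have hn' : n = (minpoly K θ).natDegree := rfl
  set m₁ := sInf (mset S θ μ₀) with hm₁
  obtain ⟨η₀, hdeg₀, hv₀⟩ := (isLeast_mset S hμ).1
  by_cases hlt : m₁ < n
  · -- bounded discrete case
    obtain ⟨B, hB⟩ := v_bounded S θ
    set N := (n * m₁).factorial with hN
    have hN0 : 0 < N := Nat.factorial_pos _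
    have hmax : ∃ g, IsGreatest (cset S θ m₁) g := by
      refine exists_greatest_of_discrete (cset S θ m₁) ⟨_, η₀, hdeg₀, rfl⟩ B ?_ N hN0 ?_
      · rintro t ⟨η, hdeg, rfl⟩
        refine hB η ?_
        show (minpoly K η).natDegree < dK (K := K) θ
        rw [← hn]
        omega
      · rintro t ⟨η, hdeg, rfl⟩
        have hηθ : η ≠ θ := fun h => by rw [h] at hdeg; omega
        have hsub0 : θ - η ≠ 0 := sub_ne_zero.mpr (Ne.symm hηθ)
        have hdummy : True := trivial
        obtain ⟨k, hk⟩ := exists_int_v S (θ - η) hsub0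
        set d := dK (K := K) (θ - η) with hd
        have hd0 : 0 < d := dK_pos _
        have hdle : d ≤ n * m₁ := by
          have h5 := dK_sub_le (K := K) θ η
          have h6 : dK (K := K) η = m₁ := hdeg
          rw [h6] at h5
          exact h5
        obtain ⟨e, he⟩ := Nat.dvd_factorial hd0 hdle
        have he0 : 0 < e := by
          rcases Nat.eq_zero_or_pos e with h | h
          · rw [h, mul_zero] at he; omega
          · exact h
        refine ⟨k * e, ?_⟩
        rw [hk]
        congr 1
        rw [hN, he]
        push_cast
        rw [div_eq_div_iff (by positivity) (by positivity)]
        ring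
    obtain ⟨g, hg⟩ := hmax
    refine ⟨g, hg, fun _ => ⟨?_, ?_⟩, fun h => absurd h (by omega)⟩
    · obtain ⟨η, hdeg, hv⟩ := hg.1
      have hηθ : η ≠ θ := fun h => by rw [h] at hdeg; omega
      rw [← hv]
      exact v_ne_top S (sub_ne_zero.mpr (Ne.symm hηθ))
    · exact lt_of_lt_of_le hv₀ (hg.2 ⟨η₀, hdeg₀, rfl⟩)
  · have heq : m₁ = n := le_antisymm (sInf_mset_le S hμ) (not_lt.mp hlt)
    refine ⟨⊤, ⟨⟨θ, by rw [heq, hn'], by rw [sub_self, v_zero]⟩, fun _ _ => le_top⟩,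
      fun h => absurd h hlt, fun _ => rfl⟩

open scoped Classical in
/-- next value of `μ` in the Okutsu recursion. -/
noncomputable def nextμ (θ : AlgebraicClosure K) (μ₀ : WithTop ℚ) : WithTop ℚ :=
  if h : ∃ c, IsGreatest (cset S θ (sInf (mset S θ μ₀))) c then h.choose else ⊤

lemma nextμ_spec {θ : AlgebraicClosure K} {μ₀ : WithTop ℚ} (hμ : μ₀ < ⊤) :
    IsGreatest (cset S θ (sInf (mset S θ μ₀))) (nextμ S θ μ₀) ∧
      (sInf (mset S θ μ₀) < dK (K := K) θ → nextμ S θ μ₀ ≠ ⊤ ∧ μ₀ < nextμ S θ μ₀) ∧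
      (sInf (mset S θ μ₀) = dK (K := K) θ → nextμ S θ μ₀ = ⊤) := by
  obtain ⟨c, hc, h2, h3⟩ := exists_greatest_cset S hμ
  have hex : ∃ c, IsGreatest (cset S θ (sInf (mset S θ μ₀))) c := ⟨c, hc⟩
  have heq : nextμ S θ μ₀ = c := by
    unfold nextμ
    rw [dif_pos hex]
    exact IsGreatest.unique hex.choose_spec hc
  rw [heq]
  exact ⟨hc, h2, h3⟩

/-- The Okutsu recursion sequence: `(m i, μ i)`. -/
noncomputable def seq (θ : AlgebraicClosure K) : ℕ → ℕ × WithTop ℚ := fun i =>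
  Nat.rec ((1 : ℕ), (0 : WithTop ℚ))
    (fun _ prev => (sInf (mset S θ prev.2), nextμ S θ prev.2)) i

/-- Existence of Okutsu data for any element of the algebraic closure. -/
theorem exists_okutsuData (θ : AlgebraicClosure K) :
    ∃ D : OkutsuData S θ (dK (K := K) θ), D.μ D.r ≠ ⊤ := by
  classical
  set n := dK (K := K) θ with hn
  have hn1 : 1 ≤ n := dK_pos θ
  set mm : ℕ → ℕ := fun i => (seq S θ i).1 with hmm
  set uu : ℕ → WithTop ℚ := fun i => (seq S θ i).2 with huu
  have hseq0 : mm 0 = 1 ∧ uu 0 = 0 := ⟨rfl, rfl⟩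
  have hseqS : ∀ i, mm (i + 1) = sInf (mset S θ (uu i)) ∧ uu (i + 1) = nextμ S θ (uu i) :=
    fun i => ⟨rfl, rfl⟩
  -- step facts
  have hL : ∀ i, uu i < ⊤ → IsLeast (mset S θ (uu i)) (mm (i + 1)) := by
    intro i hi
    rw [(hseqS i).1]
    exact isLeast_mset S hi
  have hG : ∀ i, uu i < ⊤ → IsGreatest (cset S θ (mm (i + 1))) (uu (i + 1)) := by
    intro i hi
    rw [(hseqS i).1, (hseqS i).2]
    exact (nextμ_spec S hi).1
  have hlt : ∀ i, uu i < ⊤ → mm (i + 1) < n → uu (i + 1) ≠ ⊤ ∧ uu i < uu (i + 1) := by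
    intro i hi h
    rw [(hseqS i).2]
    exact (nextμ_spec S hi).2.1 (by rw [← (hseqS i).1]; exact h)
  have hle : ∀ i, uu i < ⊤ → mm (i + 1) ≤ n := by
    intro i hi
    rw [(hseqS i).1]
    exact sInf_mset_le S hi
  have hpos1 : ∀ i, uu i < ⊤ → 1 ≤ mm (i + 1) := by
    intro i hi
    rw [(hseqS i).1]
    exact sInf_mset_pos S hi
  -- main invariant
  have claim : ∀ i : ℕ, (∀ j, 1 ≤ j → j ≤ i → mm j < n) →
      (∀ j ≤ i, uu j < ⊤) ∧ (1 ≤ i → i ≤ mm i) := by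
    intro i
    induction i with
    | zero =>
      intro _
      refine ⟨fun j hj => ?_, by omega⟩
      interval_cases j
      rw [hseq0.2]
      exact WithTop.coe_lt_top 0
    | succ i ih =>
      intro hall
      have hall' : ∀ j, 1 ≤ j → j ≤ i → mm j < n := fun j h1 h2 => hall j h1 (by omega)
      obtain ⟨htops, hmono⟩ := ih hall'
      have hui : uu i < ⊤ := htops i le_rfl
      have hmlt : mm (i + 1) < n := hall (i + 1) (by omega) le_rfl
      have hnext := hlt i hui hmlt
      refine ⟨fun j hj => ?_, fun _ => ?_⟩
      · rcases Nat.lt_or_ge j (i + 1) with h | h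
        · exact htops j (by omega)
        · have : j = i + 1 := by omega
          rw [this]
          exact lt_top_iff_ne_top.mpr hnext.1
      · rcases Nat.eq_zero_or_pos i with h0 | h0
        · rw [h0]
          exact hpos1 0 (by rw [hseq0.2]; exact WithTop.coe_lt_top 0)
        · -- strict increase : mm i < mm (i+1)
          have hi1 : i ≤ mm i := hmono h0
          have hstrict : mm i < mm (i + 1) := by
            by_contra hcon
            push_neg at hcon
            obtain ⟨η, hdeg, hv⟩ := (hL i hui).1
            have hui' : uu (i - 1) < ⊤ := htops (i - 1) (by omega)
            have hmi : mm i < n := hall i (by omega) (by omega)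
            have hstep : mm ((i - 1) + 1) = mm i := by congr 1; omega
            have hustep : uu ((i - 1) + 1) = uu i := by congr 1; omega
            rcases Nat.lt_or_ge (mm (i + 1)) (mm i) with hc | hc
            · -- smaller degree approximant contradicts leastness of mm i
              have huilt : uu (i - 1) < uu i := by
                have := (hlt (i - 1) hui' (by rw [hstep]; exact hmi)).2
                rwa [hustep] at this
              have hmem : mm (i + 1) ∈ mset S θ (uu (i - 1)) :=
                ⟨η, hdeg, lt_trans huilt hv⟩
              have := (hL (i - 1) hui').2 hmem
              rw [hstep] at this
              omega
            · have heqm : mm (i + 1) = mm i := by omega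
              have hmem : S.v (θ - η) ∈ cset S θ (mm i) := ⟨η, by rw [hdeg, heqm], rfl⟩
              have hub := (hG (i - 1) hui').2
              rw [hstep, hustep] at hub
              exact absurd (hub hmem) (not_le.mpr hv)
          omega
  -- termination
  have hterm : ∃ j, 1 ≤ j ∧ j ≤ n ∧ ¬ mm j < n := by
    by_contra hcon
    push_neg at hcon
    have := (claim n (fun j h1 h2 => hcon j h1 h2)).2 hn1
    have := hcon n hn1 le_rfl
    omega
  set T : Set ℕ := {j | 1 ≤ j ∧ ¬ mm j < n} with hT
  have hTne : T.Nonempty := by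
    obtain ⟨j, h1, _, h3⟩ := hterm
    exact ⟨j, h1, h3⟩
  set s := sInf T with hs
  have hsmem : s ∈ T := Nat.sInf_mem hTne
  have hs1 : 1 ≤ s := hsmem.1
  have hsmall : ∀ j, 1 ≤ j → j < s → mm j < n := by
    intro j h1 h2
    by_contra hcon
    have hj : j ∈ T := by rw [hT]; exact ⟨h1, hcon⟩
    have := Nat.sInf_le hj
    omega
  have htops : ∀ j ≤ s - 1, uu j < ⊤ :=
    (claim (s - 1) (fun j h1 h2 => hsmall j h1 (by omega))).1
  have hmsn : mm s = n := by
    have h1 : uu (s - 1) < ⊤ := htops (s - 1) le_rfl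
    have h2 := hle (s - 1) h1
    have h3 : (s - 1) + 1 = s := by omega
    rw [h3] at h2
    have := hsmem.2
    omega
  -- build the data
  refine ⟨⟨s - 1, mm, uu, hseq0.1, hseq0.2, ?_, ?_, ?_, ?_⟩, ?_⟩
  · intro i h1 h2
    have h3 : i - 1 ≤ s - 1 := by omega
    have h4 := hL (i - 1) (htops (i - 1) h3)
    have h5 : (i - 1) + 1 = i := by omega
    rw [h5] at h4
    exact h4
  · intro i h1 h2
    have h3 : i - 1 ≤ s - 1 := by omega
    have h4 := hG (i - 1) (htops (i - 1) h3)
    have h5 : (i - 1) + 1 = i := by omega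
    rw [h5] at h4
    exact h4
  · intro i h1 h2
    exact hsmall i h1 (by omega)
  · show mm ((s - 1) + 1) = n
    have h3 : (s - 1) + 1 = s := by omega
    rw [h3]
    exact hmsn
  · show uu (s - 1) ≠ ⊤
    exact (htops (s - 1) le_rfl).ne

section DataLemmas

variable {θ α : AlgebraicClosure K} {n : ℕ}

lemma mu_step (D : OkutsuData S θ n) {i : ℕ} (h1 : 1 ≤ i) (h2 : i ≤ D.r + 1) :
    D.μ (i - 1) < D.μ i := by
  obtain ⟨η, hdeg, hv⟩ := (D.m_isLeast i h1 h2).1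
  exact lt_of_lt_of_le hv ((D.mu_isGreatest i h1 h2).2 ⟨η, hdeg, rfl⟩)

lemma mu_mono (D : OkutsuData S θ n) {i j : ℕ} (hij : i ≤ j) (hj : j ≤ D.r + 1) :
    D.μ i ≤ D.μ j := by
  induction j with
  | zero => simp_all
  | succ j ih =>
    rcases Nat.lt_or_ge i (j + 1) with h | h
    · have h3 := mu_step S D (i := j + 1) (by omega) hj
      simp only [Nat.add_sub_cancel] at h3
      exact le_trans (ih (by omega) (by omega)) h3.le
    · have : i = j + 1 := by omega
      rw [this]

lemma vle_mu_r (D : OkutsuData S θ n) (η : AlgebraicClosure K)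
    (hdeg : (minpoly K η).natDegree < n) : S.v (θ - η) ≤ D.μ D.r := by
  by_contra hcon
  push_neg at hcon
  have hmem := (D.m_isLeast (D.r + 1) (by omega) le_rfl).2
    (show (minpoly K η).natDegree ∈ _ from ⟨η, rfl, by simpa using hcon⟩)
  rw [D.m_last] at hmem
  omega

lemma mu_r_ne_top (D : OkutsuData S θ n) (hθn : (minpoly K θ).natDegree = n) :
    D.μ D.r ≠ ⊤ := by
  rcases Nat.eq_zero_or_pos D.r with h | h
  · rw [h, D.mu_zero]
    exact WithTop.zero_ne_top
  · obtain ⟨η, hdeg, hv⟩ := (D.mu_isGreatest D.r h (by omega)).1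
    have hmn : D.m D.r < n := D.m_lt_n D.r h le_rfl
    have hηθ : η ≠ θ := fun hh => by rw [hh, hθn] at hdeg; omega
    rw [← hv]
    exact v_ne_top S (sub_ne_zero.mpr (Ne.symm hηθ))

lemma mu_top (D : OkutsuData S θ n) (hθn : (minpoly K θ).natDegree = n) :
    D.μ (D.r + 1) = ⊤ := by
  have := (D.mu_isGreatest (D.r + 1) (by omega) le_rfl).2
    (show (⊤ : WithTop ℚ) ∈ _ from ⟨θ, by rw [hθn, D.m_last], by rw [sub_self, v_zero]⟩)
  exact le_antisymm le_top this

lemma m_le_n (D : OkutsuData S θ n) {i : ℕ} (h1 : 1 ≤ i) (h2 : i ≤ D.r + 1) :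
    D.m i ≤ n := by
  rcases Nat.lt_or_ge i (D.r + 1) with h | h
  · exact (D.m_lt_n i h1 (by omega)).le
  · have : i = D.r + 1 := by omega
    rw [this, D.m_last]

/-- Uniqueness of Okutsu data. -/
lemma data_unique {n' : ℕ} (D₁ : OkutsuData S θ n) (D₂ : OkutsuData S θ n') (hnn : n = n') :
    D₁.r = D₂.r ∧ ∀ i ≤ D₁.r + 1, D₁.m i = D₂.m i ∧ D₁.μ i = D₂.μ i := by
  subst hnn
  have key : ∀ i ≤ min D₁.r D₂.r + 1, D₁.m i = D₂.m i ∧ D₁.μ i = D₂.μ i := by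
    intro i
    induction i with
    | zero => exact fun _ => ⟨by rw [D₁.m_zero, D₂.m_zero], by rw [D₁.mu_zero, D₂.mu_zero]⟩
    | succ i ih =>
      intro h
      obtain ⟨ihm, ihμ⟩ := ih (by omega)
      have h1 : 1 ≤ i + 1 := by omega
      have h2 : i + 1 ≤ D₁.r + 1 := by omega
      have h2' : i + 1 ≤ D₂.r + 1 := by omega
      have hL1 := D₁.m_isLeast (i + 1) h1 h2
      have hL2 := D₂.m_isLeast (i + 1) h1 h2'
      simp only [Nat.add_sub_cancel] at hL1 hL2
      rw [← ihμ] at hL2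
      have hm : D₁.m (i + 1) = D₂.m (i + 1) := IsLeast.unique hL1 hL2
      have hG1 := D₁.mu_isGreatest (i + 1) h1 h2
      have hG2 := D₂.mu_isGreatest (i + 1) h1 h2'
      rw [← hm] at hG2
      exact ⟨hm, IsGreatest.unique hG1 hG2⟩
  have hrr : D₁.r = D₂.r := by
    by_contra hne
    rcases Nat.lt_or_ge D₁.r D₂.r with h | h
    · have hmin : min D₁.r D₂.r = D₁.r := by omega
      have := (key (D₁.r + 1) (by omega)).1
      rw [D₁.m_last] at this
      have h2 := D₂.m_lt_n (D₁.r + 1) (by omega) (by omega)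
      omega
    · have h' : D₂.r < D₁.r := by omega
      have := (key (D₂.r + 1) (by omega)).1
      rw [D₂.m_last] at this
      have h2 := D₁.m_lt_n (D₂.r + 1) (by omega) (by omega)
      omega
  refine ⟨hrr, fun i hi => key i (by omega)⟩

/-- Transfer of Okutsu data along a Montes approximation. -/
lemma transfer (hθn : (minpoly K θ).natDegree = n) (hαn : (minpoly K α).natDegree = n)
    (D : OkutsuData S θ n) (hv : D.μ D.r < S.v (θ - α)) {n' : ℕ} (hnn : n = n') :
    ∃ D' : OkutsuData S α n', D'.r = D.r ∧ D'.m = D.m ∧ D'.μ = D.μ := by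
  subst hnn
  have K2 : ∀ η : AlgebraicClosure K, (minpoly K η).natDegree < n →
      S.v (α - η) = S.v (θ - η) := by
    intro η hdeg
    exact v_three S (lt_of_le_of_lt (vle_mu_r S D η hdeg) hv)
  refine ⟨⟨D.r, D.m, D.μ, D.m_zero, D.mu_zero, ?_, ?_, D.m_lt_n, D.m_last⟩, rfl, rfl, rfl⟩
  · intro i h1 h2
    obtain ⟨hmem, hlb⟩ := D.m_isLeast i h1 h2
    constructor
    · by_cases hi : i ≤ D.r
      · obtain ⟨η, hdeg, hv'⟩ := hmem
        have hdn : (minpoly K η).natDegree < n := by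
          rw [hdeg]; exact D.m_lt_n i h1 hi
        exact ⟨η, hdeg, by rw [K2 η hdn]; exact hv'⟩
      · have hieq : i = D.r + 1 := by omega
        refine ⟨α, by rw [hαn, hieq, D.m_last], ?_⟩
        rw [sub_self, v_zero]
        have hμle : D.μ (i - 1) ≤ D.μ D.r := by
          rw [hieq]
          simp only [Nat.add_sub_cancel]
          exact le_rfl
        exact lt_of_le_of_lt hμle (lt_of_lt_of_le hv le_top)
    · rintro d ⟨η, hdeg, hv'⟩
      by_cases hdn : d < n
      · refine hlb ⟨η, hdeg, ?_⟩
        rw [← K2 η (by rw [hdeg]; exact hdn)]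
        exact hv'
      · have := m_le_n S D h1 h2
        omega
  · intro i h1 h2
    obtain ⟨hmem, hub⟩ := D.mu_isGreatest i h1 h2
    by_cases hi : i ≤ D.r
    · have hmn : D.m i < n := D.m_lt_n i h1 hi
      constructor
      · obtain ⟨η, hdeg, hv'⟩ := hmem
        exact ⟨η, hdeg, by rw [K2 η (by rw [hdeg]; exact hmn)]; exact hv'⟩
      · rintro c ⟨η, hdeg, rfl⟩
        rw [K2 η (by rw [hdeg]; exact hmn)]
        exact hub ⟨η, hdeg, rfl⟩
    · have hieq : i = D.r + 1 := by omega
      have htop : D.μ i = ⊤ := by rw [hieq]; exact mu_top S D hθn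
      constructor
      · exact ⟨α, by rw [hαn, hieq, D.m_last], by rw [sub_self, v_zero, htop]⟩
      · intro c _
        rw [htop]
        exact le_top

/-- Transport of Okutsu data along a `K`-automorphism of the algebraic closure. -/
lemma data_conj (σ : AlgebraicClosure K ≃ₐ[K] AlgebraicClosure K) (D : OkutsuData S θ n)
    {β : AlgebraicClosure K} (hβ : σ θ = β) :
    ∃ D' : OkutsuData S β n, D'.r = D.r ∧ D'.m = D.m ∧ D'.μ = D.μ := by
  subst hβ
  have hvσ : ∀ η : AlgebraicClosure K, S.v (σ θ - σ η) = S.v (θ - η) := by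
    intro η
    rw [← map_sub, v_conj]
  have hdσ : ∀ η : AlgebraicClosure K, (minpoly K (σ η)).natDegree = (minpoly K η).natDegree :=
    fun η => by rw [minpoly.algEquiv_eq]
  refine ⟨⟨D.r, D.m, D.μ, D.m_zero, D.mu_zero, ?_, ?_, D.m_lt_n, D.m_last⟩, rfl, rfl, rfl⟩
  · intro i h1 h2
    obtain ⟨⟨η, hdeg, hv'⟩, hlb⟩ := D.m_isLeast i h1 h2
    refine ⟨⟨σ η, by rw [hdσ]; exact hdeg, by rw [hvσ]; exact hv'⟩, ?_⟩
    rintro d ⟨η, hdeg, hv'⟩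
    refine hlb ⟨σ.symm η, by rw [minpoly.algEquiv_eq σ.symm]; exact hdeg, ?_⟩
    have h3 := hvσ (σ.symm η)
    rw [AlgEquiv.apply_symm_apply] at h3
    rw [h3] at hv'
    exact hv'
  · intro i h1 h2
    obtain ⟨⟨η, hdeg, hv'⟩, hub⟩ := D.mu_isGreatest i h1 h2
    refine ⟨⟨σ η, by rw [hdσ]; exact hdeg, by rw [hvσ]; exact hv'⟩, ?_⟩
    rintro c ⟨η, hdeg, rfl⟩
    have h3 := hvσ (σ.symm η)
    rw [AlgEquiv.apply_symm_apply] at h3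
    rw [h3]
    exact hub ⟨σ.symm η, by rw [minpoly.algEquiv_eq σ.symm]; exact hdeg, rfl⟩

end DataLemmas

section Montes

lemma minpoly_of_root {g : Polynomial S.integers} (hmon : g.Monic)
    (hirr : Irreducible (g.map S.integers.subtype)) {x : AlgebraicClosure K}
    (hx : S.evalK g x = 0) : minpoly K x = g.map S.integers.subtype := by
  have hroot : Polynomial.aeval x (g.map S.integers.subtype) = 0 := hx
  exact (minpoly.eq_of_irreducible_of_monic hirr hroot (hmon.map _)).symm

lemma deg_of_root {g : Polynomial S.integers} (hmon : g.Monic)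
    (hirr : Irreducible (g.map S.integers.subtype)) {x : AlgebraicClosure K}
    (hx : S.evalK g x = 0) : (minpoly K x).natDegree = g.natDegree := by
  rw [minpoly_of_root S hmon hirr hx]
  exact hmon.natDegree_map _

lemma exists_root (g : Polynomial S.integers)
    (hirr : Irreducible (g.map S.integers.subtype)) : ∃ x, S.evalK g x = 0 := by
  set p := (g.map S.integers.subtype).map (algebraMap K (AlgebraicClosure K)) with hp
  have hdeg : p.degree ≠ 0 := by
    rw [hp, Polynomial.degree_map_eq_of_injective (algebraMap K (AlgebraicClosure K)).injective]
    exact (Polynomial.degree_pos_of_irreducible hirr).ne'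
  obtain ⟨x, hx⟩ := IsAlgClosed.exists_root p hdeg
  refine ⟨x, ?_⟩
  show Polynomial.aeval x (g.map S.integers.subtype) = 0
  rwa [Polynomial.aeval_def, ← Polynomial.eval_map]

lemma exists_okutsuData' (x : AlgebraicClosure K) {n : ℕ}
    (h : (minpoly K x).natDegree = n) : ∃ D : OkutsuData S x n, D.μ D.r ≠ ⊤ := by
  subst h
  exact exists_okutsuData S x

lemma montes_refl (g : Polynomial S.integers) (hmon : g.Monic)
    (hirr : Irreducible (g.map S.integers.subtype)) : S.IsMontesApprox g g := by
  obtain ⟨x, hx⟩ := exists_root S g hirr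
  obtain ⟨D, hD⟩ := exists_okutsuData' S x (deg_of_root S hmon hirr hx)
  exact ⟨hmon, hirr, rfl, x, hx, D, x, hx, by
    rw [sub_self, v_zero]; exact lt_top_iff_ne_top.mpr hD⟩

lemma montes_symm {F₁ F₂ : Polynomial S.integers} (hmon : F₁.Monic)
    (hirr : Irreducible (F₁.map S.integers.subtype)) (h : S.IsMontesApprox F₁ F₂) :
    S.IsMontesApprox F₂ F₁ := by
  obtain ⟨hmon2, hirr2, hdeg2, θ, hθ, D, α, hα, hv⟩ := h
  have hθn : (minpoly K θ).natDegree = F₁.natDegree := deg_of_root S hmon hirr hθ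
  have hαn : (minpoly K α).natDegree = F₁.natDegree := by
    rw [deg_of_root S hmon2 hirr2 hα]; exact hdeg2
  obtain ⟨D', hr, hm, hμ⟩ := transfer S hθn hαn D hv hdeg2.symm
  refine ⟨hmon, hirr, hdeg2.symm, α, hα, D', θ, hθ, ?_⟩
  rw [hμ, hr, v_sub_comm S]
  exact hv

lemma montes_trans {F₁ F₂ F₃ : Polynomial S.integers} (hmon1 : F₁.Monic)
    (hirr1 : Irreducible (F₁.map S.integers.subtype))
    (h12 : S.IsMontesApprox F₁ F₂) (h23 : S.IsMontesApprox F₂ F₃) :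
    S.IsMontesApprox F₁ F₃ := by
  obtain ⟨hmon2, hirr2, hdeg21, θ₁, hθ₁, D₁, α₁, hα₁, hv₁⟩ := h12
  obtain ⟨hmon3, hirr3, hdeg32, θ₂, hθ₂, D₂, α₂, hα₂, hv₂⟩ := h23
  have hθ₁n : (minpoly K θ₁).natDegree = F₁.natDegree := deg_of_root S hmon1 hirr1 hθ₁
  have hα₁n : (minpoly K α₁).natDegree = F₁.natDegree := by
    rw [deg_of_root S hmon2 hirr2 hα₁]; exact hdeg21
  have hmin : minpoly K θ₂ = F₂.map S.integers.subtype := minpoly_of_root S hmon2 hirr2 hθ₂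
  obtain ⟨σ, hσ⟩ := exists_conj (x := θ₂) (y := α₁) (by rw [hmin]; exact hα₁)
  obtain ⟨D₂', hr2, hm2, hμ2⟩ := data_conj S σ D₂ hσ
  obtain ⟨D₁', hr1, hm1, hμ1⟩ := transfer S hθ₁n hα₁n D₁ hv₁ rfl
  obtain ⟨hrr, hkey⟩ := data_unique S D₂' D₁' hdeg21
  have hc : D₂.μ D₂.r = D₁.μ D₁.r := by
    calc D₂.μ D₂.r = D₂'.μ D₂'.r := by rw [hμ2, hr2]
      _ = D₁'.μ D₂'.r := (hkey D₂'.r (by omega)).2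
      _ = D₁.μ D₁.r := by rw [hμ1, hrr, hr1]
  refine ⟨hmon3, hirr3, by rw [hdeg32, hdeg21], θ₁, hθ₁, D₁, σ α₂, ?_, ?_⟩
  · show Polynomial.aeval (σ α₂) (F₃.map S.integers.subtype) = 0
    have h0 : Polynomial.aeval (σ α₂) (F₃.map S.integers.subtype)
        = σ (Polynomial.aeval α₂ (F₃.map S.integers.subtype)) :=
      Polynomial.aeval_algHom_apply σ.toAlgHom α₂ _
    rw [h0, show Polynomial.aeval α₂ (F₃.map S.integers.subtype) = 0 from hα₂, map_zero]
  · have hA : D₁.μ D₁.r < S.v (α₁ - σ α₂) := by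
      have heq : α₁ - σ α₂ = σ (θ₂ - α₂) := by rw [map_sub, hσ]
      rw [heq, v_conj, ← hc]
      exact hv₂
    have hsum : θ₁ - σ α₂ = (θ₁ - α₁) + (α₁ - σ α₂) := by ring
    calc D₁.μ D₁.r < min (S.v (θ₁ - α₁)) (S.v (α₁ - σ α₂)) := lt_min hv₁ hA
      _ ≤ S.v (θ₁ - σ α₂) := by rw [hsum]; exact S.v_min_le_add _ _

end Montes

end OkutsuProof

open OkutsuSetup in
/-- Let `F ∈ 𝓞[x]` be monic irreducible of degree `n` with root `θ`,
of depth `r`, and let `φ ∈ 𝓞[x]` be a Montes approximation to `F` (with root `α`,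
`v(θ - α) > μ_r`).  Then any Okutsu frame of `F` is an Okutsu frame of `φ` and vice
versa; in particular the relation "to be a Montes approximation to" is an equivalence
relation on the set of all monic irreducible polynomials in `𝓞[x]`. -/
theorem okutsu_stmt_17 {K : Type} [Field K] [CharZero K] (S : OkutsuSetup K)
    (F : Polynomial S.integers) (hFmonic : F.Monic)
    (hFirr : Irreducible (F.map S.integers.subtype))
    (n : ℕ) (hFdeg : F.natDegree = n)
    (θ : AlgebraicClosure K) (hθ : S.evalK F θ = 0)
    (D : OkutsuData S θ n)
    (φ : Polynomial S.integers) (hφmonic : φ.Monic)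
    (hφirr : Irreducible (φ.map S.integers.subtype))
    (hφdeg : φ.natDegree = n)
    (α : AlgebraicClosure K) (hαroot : S.evalK φ α = 0)
    (hαv : D.μ D.r < S.v (θ - α)) :
    -- any Okutsu frame of `F` is an Okutsu frame of `φ`…
    (∀ Fr : ℕ → Polynomial S.integers, S.IsFrame D Fr →
      ∃ D' : OkutsuData S α n, D'.r = D.r ∧ S.IsFrame D' Fr) ∧
    -- …and vice versa
    (∀ (D' : OkutsuData S α n) (Fr : ℕ → Polynomial S.integers),
      S.IsFrame D' Fr → S.IsFrame D Fr) ∧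
    -- in particular, "to be a Montes approximation to" is an equivalence relation on
    -- the set of all monic irreducible polynomials of `𝓞[x]`
    Equivalence (fun F₁ F₂ : {g : Polynomial S.integers //
        g.Monic ∧ Irreducible (g.map S.integers.subtype)} =>
      S.IsMontesApprox F₁.1 F₂.1) := by
  have hθn : (minpoly K θ).natDegree = n := by
    rw [OkutsuProof.deg_of_root S hFmonic hFirr hθ]; exact hFdeg
  have hαn : (minpoly K α).natDegree = n := by
    rw [OkutsuProof.deg_of_root S hφmonic hφirr hαroot]; exact hφdeg
  refine ⟨?_, ?_, ?_⟩
  · -- frames of F are frames of φ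
    intro Fr hFr
    obtain ⟨D', hr, hm, hμ⟩ := OkutsuProof.transfer S hθn hαn D hαv rfl
    refine ⟨D', hr, ?_⟩
    intro i h1 h2
    rw [hr] at h2
    obtain ⟨β, hdeg, hvβ, hFrm⟩ := hFr i h1 h2
    refine ⟨β, by rw [hm]; exact hdeg, ?_, hFrm⟩
    rw [hμ]
    have h4 : D.μ i ≤ D.μ D.r := OkutsuProof.mu_mono S D h2 (by omega)
    have h5 : S.v (θ - β) < S.v (θ - α) := by
      rw [hvβ]; exact lt_of_le_of_lt h4 hαv
    rw [OkutsuProof.v_three S h5]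
    exact hvβ
  · -- frames of φ are frames of F
    intro D' Fr hFr
    obtain ⟨D₀, hr, hm, hμ⟩ := OkutsuProof.transfer S hθn hαn D hαv rfl
    obtain ⟨hrr, hkey⟩ := OkutsuProof.data_unique S D' D₀ rfl
    intro i h1 h2
    have h2' : i ≤ D'.r := by rw [hrr, hr]; exact h2
    obtain ⟨β, hdeg, hvβ, hFrm⟩ := hFr i h1 h2'
    have hmi : D'.m i = D.m i := by rw [(hkey i (by omega)).1, hm]
    have hμi : D'.μ i = D.μ i := by rw [(hkey i (by omega)).2, hμ]
    refine ⟨β, by rw [← hmi]; exact hdeg, ?_, hFrm⟩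
    have h4 : D.μ i ≤ D.μ D.r := OkutsuProof.mu_mono S D h2 (by omega)
    have h5 : S.v (α - β) < S.v (α - θ) := by
      rw [hvβ, hμi, OkutsuProof.v_sub_comm S α θ]
      exact lt_of_le_of_lt h4 hαv
    rw [OkutsuProof.v_three S h5, hvβ, hμi]
  · -- equivalence relation
    refine ⟨?_, ?_, ?_⟩
    · rintro ⟨g, hmon, hirr⟩
      exact OkutsuProof.montes_refl S g hmon hirr
    · rintro ⟨F₁, hmon1, hirr1⟩ ⟨F₂, hmon2, hirr2⟩ h
      exact OkutsuProof.montes_symm S hmon1 hirr1 h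
    · rintro ⟨F₁, hmon1, hirr1⟩ ⟨F₂, hmon2, hirr2⟩ ⟨F₃, hmon3, hirr3⟩ h12 h23
      exact OkutsuProof.montes_trans S hmon1 hirr1 h12 h23
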